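/- For every integer k ≥ 2, define F_k(x) = δ_k(x) − k(x−k) − 1, where δ_k(x) = 2x·∑_{j=1}^{k/2} cos((k−(2j−1))π/x) if k is even, and δ_k(x) = x + 2x·∑_{j=1}^{(k−1)/2} cos((k−(2j−1))π/x) if k is odd. Then the second derivative of F_k is negative on (2(k−1), ∞), i.e., F_k is strictly concave on (2(k−1), ∞). -/

import Mathlib

open Real Finset

lemma hasDerivAt_div_const_inv (c x : ℝ) (hx : x ≠ 0) :
    HasDerivAt (fun y => c / y) (-(c / x ^ 2)) x := by
  have h := (hasDerivAt_inv hx).const_mul c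
  refine h.congr_deriv ?_
  field_simp

lemma hasDerivAt_term (c x : ℝ) (hx : x ≠ 0) :
    HasDerivAt (fun y => 2 * y * Real.cos (c / y))
      (2 * Real.cos (c / x) + 2 * c / x * Real.sin (c / x)) x := by
  have h1 := hasDerivAt_div_const_inv c x hx
  have h2 := h1.cos
  have h3 : HasDerivAt (fun y : ℝ => 2 * y) 2 x := by
    simpa using (hasDerivAt_id x).const_mul 2
  have h := h3.mul h2
  refine h.congr_deriv ?_
  field_simp

lemma hasDerivAt_term2 (c x : ℝ) (hx : x ≠ 0) :
    HasDerivAt (fun y => 2 * Real.cos (c / y) + 2 * c / y * Real.sin (c / y))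
      (-(2 * c ^ 2 * Real.cos (c / x) / x ^ 3)) x := by
  have h1 := hasDerivAt_div_const_inv c x hx
  have h2 := (h1.cos).const_mul 2
  have h4 := h1.sin
  have h5 := hasDerivAt_div_const_inv (2 * c) x hx
  have h6 := h5.mul h4
  have h := h2.add h6
  refine h.congr_deriv ?_
  field_simp
  ring

lemma key (m : ℕ) (hm : 1 ≤ m) (a : ℕ → ℝ) (b d : ℝ) (G : ℝ → ℝ)
    (hG : ∀ y, G y = 2 * y * ∑ j ∈ Finset.Icc 1 m, Real.cos (a j * π / y) + (b * y + d))
    (x : ℝ) (hx : 0 < x)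
    (ha : ∀ j ∈ Finset.Icc 1 m, 0 < a j ∧ 2 * a j < x) :
    deriv (deriv G) x < 0 := by
  set G1 : ℝ → ℝ := fun y =>
    (∑ j ∈ Finset.Icc 1 m,
      (2 * Real.cos (a j * π / y) + 2 * (a j * π) / y * Real.sin (a j * π / y))) + b with hG1
  have hd1 : ∀ y : ℝ, y ≠ 0 → HasDerivAt G (G1 y) y := by
    intro y hy
    have hsum : HasDerivAt (fun z => ∑ j ∈ Finset.Icc 1 m, 2 * z * Real.cos (a j * π / z))
        (∑ j ∈ Finset.Icc 1 m,
          (2 * Real.cos (a j * π / y) + 2 * (a j * π) / y * Real.sin (a j * π / y))) y :=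
      HasDerivAt.fun_sum fun j _ => hasDerivAt_term (a j * π) y hy
    have hlin : HasDerivAt (fun z => b * z + d) b y := by
      simpa using ((hasDerivAt_id y).const_mul b).add_const d
    have hh := hsum.add hlin
    have hGeq : G = fun z =>
        (∑ j ∈ Finset.Icc 1 m, 2 * z * Real.cos (a j * π / z)) + (b * z + d) := by
      funext z; rw [hG z, Finset.mul_sum]
    rw [hGeq]
    exact hh
  have hev : deriv G =ᶠ[nhds x] G1 := by
    filter_upwards [Ioi_mem_nhds hx] with y hy
    exact (hd1 y (ne_of_gt hy)).deriv
  rw [hev.deriv_eq]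
  have hd2 : HasDerivAt G1
      (∑ j ∈ Finset.Icc 1 m, -(2 * (a j * π) ^ 2 * Real.cos (a j * π / x) / x ^ 3)) x :=
    (HasDerivAt.fun_sum fun j _ => hasDerivAt_term2 (a j * π) x (ne_of_gt hx)).add_const b
  rw [hd2.deriv]
  apply Finset.sum_neg
  · intro j hj
    obtain ⟨haj, hax⟩ := ha j hj
    have hπ := Real.pi_pos
    have hcos : 0 < Real.cos (a j * π / x) := by
      apply Real.cos_pos_of_mem_Ioo
      constructor
      · have : 0 < a j * π / x := div_pos (mul_pos haj hπ) hx
        linarith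
      · rw [div_lt_iff₀ hx]
        nlinarith [mul_pos hπ (sub_pos.mpr hax)]
    have hpos : 0 < 2 * (a j * π) ^ 2 * Real.cos (a j * π / x) / x ^ 3 := by
      apply div_pos
      · apply mul_pos
        · positivity
        · exact hcos
      · exact pow_pos hx 3
    linarith
  · exact Finset.nonempty_Icc.mpr hm

theorem stmt_8 (k : ℕ) (hk : 2 ≤ k) (F : ℝ → ℝ)
    (hF : ∀ x : ℝ, F x =
      (if Even k then
        2 * x * ∑ j ∈ Finset.Icc 1 (k / 2), Real.cos (((k : ℝ) - (2 * (j : ℝ) - 1)) * π / x)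
      else
        x + 2 * x * ∑ j ∈ Finset.Icc 1 ((k - 1) / 2),
          Real.cos (((k : ℝ) - (2 * (j : ℝ) - 1)) * π / x))
      - k * (x - k) - 1) :
    ∀ x ∈ Set.Ioi (2 * ((k : ℝ) - 1)), deriv (deriv F) x < 0 := by
  intro x hx
  simp only [Set.mem_Ioi] at hx
  have hk2 : (2 : ℝ) ≤ (k : ℝ) := by exact_mod_cast hk
  have hx0 : 0 < x := by linarith
  by_cases hke : Even k
  · have hGe : ∀ y, F y =
        2 * y * ∑ j ∈ Finset.Icc 1 (k / 2),
          Real.cos (((k : ℝ) - (2 * (j : ℝ) - 1)) * π / y)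
        + ((-(k : ℝ)) * y + ((k : ℝ) * k - 1)) := by
      intro y; rw [hF y, if_pos hke]; ring
    have hm : 1 ≤ k / 2 := Nat.one_le_div_iff (by norm_num) |>.mpr hk
    refine key (k / 2) hm (fun j => (k : ℝ) - (2 * (j : ℝ) - 1)) (-(k : ℝ)) ((k : ℝ) * k - 1)
      F hGe x hx0 ?_
    intro j hj
    simp only [Finset.mem_Icc] at hj
    obtain ⟨h1j, h2j⟩ := hj
    have h2 : j * 2 ≤ k := (Nat.le_div_iff_mul_le (by norm_num)).mp h2j
    have h2' : (j : ℝ) * 2 ≤ (k : ℝ) := by exact_mod_cast h2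
    have h1' : (1 : ℝ) ≤ (j : ℝ) := by exact_mod_cast h1j
    constructor <;> linarith
  · have hko := Nat.odd_iff.mp (Nat.not_even_iff_odd.mp hke)
    have hGe : ∀ y, F y =
        2 * y * ∑ j ∈ Finset.Icc 1 ((k - 1) / 2),
          Real.cos (((k : ℝ) - (2 * (j : ℝ) - 1)) * π / y)
        + (((1 : ℝ) - (k : ℝ)) * y + ((k : ℝ) * k - 1)) := by
      intro y; rw [hF y, if_neg hke]; ring
    have hm : 1 ≤ (k - 1) / 2 := by omega
    refine key ((k - 1) / 2) hm (fun j => (k : ℝ) - (2 * (j : ℝ) - 1)) ((1 : ℝ) - (k : ℝ))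
      ((k : ℝ) * k - 1) F hGe x hx0 ?_
    intro j hj
    simp only [Finset.mem_Icc] at hj
    obtain ⟨h1j, h2j⟩ := hj
    have h2 : j * 2 ≤ k - 1 := (Nat.le_div_iff_mul_le (by norm_num)).mp h2j
    have h2n : j * 2 + 1 ≤ k := by omega
    have h2' : (j : ℝ) * 2 + 1 ≤ (k : ℝ) := by exact_mod_cast h2n
    have h1' : (1 : ℝ) ≤ (j : ℝ) := by exact_mod_cast h1j
    constructor <;> linarith
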